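/- The set D' ⊆ Σ^∞ of sequences that are not disjunctive is a Borel and σ-porous subset of the Cantor space (Σ^∞, ϱ) with respect to the Baire metric. -/
import Mathlib


open Metric Filter Set MeasureTheory

/-- A sequence of symbols is disjunctive if it contains every finite word
as a block of consecutive letters. -/
def Disjunctive {Γ : Type*} (σ : ℕ → Γ) : Prop :=
  ∀ (m : ℕ) (w : Fin m → Γ), ∃ j : ℕ, ∀ l : Fin m, σ (j + l.1) = w l

open Classical in
/-- The Baire metric `ϱ(x,y) = 2^{-min{i ≥ 1 : x_i ≠ y_i}}` on the Cantor space of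
(0-indexed) sequences: here `min` of the 1-indexed paper corresponds to `sInf + 1`. -/
noncomputable def baireDist {Γ : Type*} (x y : ℕ → Γ) : ℝ :=
  if x = y then 0 else (2 : ℝ) ^ (-((sInf {i : ℕ | x i ≠ y i} : ℕ) : ℤ) - 1)

/-- `Ψ` is porous with respect to the distance function `ρ`. -/
def PorousWith {M : Type*} (ρ : M → M → ℝ) (Ψ : Set M) : Prop :=
  ∃ lam : ℝ, 0 < lam ∧ lam < 1 ∧ ∃ r₀ : ℝ, 0 < r₀ ∧
    ∀ ψ ∈ Ψ, ∀ r : ℝ, 0 < r → r < r₀ →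
      ∃ υ : M, {x : M | ρ υ x < lam * r} ⊆ {x : M | ρ ψ x < r} \ Ψ

/-- `Ψ` is σ-porous with respect to `ρ`: a countable union of porous sets. -/
def SigmaPorousWith {M : Type*} (ρ : M → M → ℝ) (Ψ : Set M) : Prop :=
  ∃ c : ℕ → Set M, (∀ n : ℕ, PorousWith ρ (c n)) ∧ Ψ = ⋃ n : ℕ, c n

lemma baireDist_le_of_agree {Γ : Type*} {x y : ℕ → Γ} {k : ℕ}
    (h : ∀ i < k, x i = y i) : baireDist x y ≤ (2:ℝ) ^ (-(k:ℤ) - 1) := by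
  unfold baireDist
  split_ifs with hxy
  · positivity
  · apply zpow_le_zpow_right₀ one_le_two
    have hd : k ≤ sInf {i : ℕ | x i ≠ y i} := by
      by_contra hlt
      push_neg at hlt
      have hne : {i : ℕ | x i ≠ y i}.Nonempty := Function.ne_iff.mp hxy
      exact (Nat.sInf_mem hne) (h _ hlt)
    omega

lemma agree_of_baireDist_lt {Γ : Type*} {x y : ℕ → Γ} {k : ℕ}
    (h : baireDist x y < (2:ℝ) ^ (-(k:ℤ) - 1)) : ∀ i ≤ k, x i = y i := by
  unfold baireDist at h
  split_ifs at h with hxy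
  · intro i _; rw [hxy]
  · intro i hi
    have h2 := (zpow_lt_zpow_iff_right₀ (by norm_num : (1:ℝ) < 2)).mp h
    have := Nat.notMem_of_lt_sInf (show i < sInf {i : ℕ | x i ≠ y i} by omega)
    simpa using this

/-- Set of sequences avoiding the word `w` at every position. -/
def BadSet {Γ : Type*} (m : ℕ) (w : Fin m → Γ) : Set (ℕ → Γ) :=
  {σ | ∀ j : ℕ, ∃ l : Fin m, σ (j + l.1) ≠ w l}

lemma porousWith_badSet {Γ : Type*} (m : ℕ) (w : Fin m → Γ) :
    PorousWith baireDist (BadSet m w) := by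
  refine ⟨(2:ℝ) ^ (-(m:ℤ) - 2), by positivity, ?_, 1, one_pos, ?_⟩
  · calc (2:ℝ) ^ (-(m:ℤ) - 2) ≤ (2:ℝ) ^ (-2 : ℤ) :=
        zpow_le_zpow_right₀ one_le_two (by omega)
      _ < 1 := by norm_num
  · intro ψ hψ r hr hr1
    -- find n with 2^{-n} ≤ r < 2^{-n+1}
    have hex : ∃ k : ℕ, (2:ℝ) ^ (-(k:ℤ)) ≤ r := by
      obtain ⟨k, hk⟩ := exists_pow_lt_of_lt_one hr (by norm_num : (1:ℝ)/2 < 1)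
      refine ⟨k, le_of_lt ?_⟩
      rw [show ((2:ℝ) ^ (-(k:ℤ))) = ((1:ℝ)/2) ^ k by
        rw [zpow_neg, zpow_natCast, one_div, inv_pow]]
      exact hk
    set n := Nat.find hex with hn_def
    have hn : (2:ℝ) ^ (-(n:ℤ)) ≤ r := Nat.find_spec hex
    have hn1 : 1 ≤ n := by
      rcases Nat.eq_zero_or_pos n with h0 | h; swap; · exact h
      rw [h0] at hn; norm_num at hn; linarith
    have hmin : r < (2:ℝ) ^ (-(n:ℤ) + 1) := by
      have := Nat.find_min hex (show n - 1 < n by omega)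
      push_neg at this
      calc r < (2:ℝ) ^ (-((n-1 : ℕ):ℤ)) := this
        _ = (2:ℝ) ^ (-(n:ℤ) + 1) := by congr 1; omega
    -- the translated point
    set υ : ℕ → Γ := fun i =>
      if h' : i < n then ψ i else if h : i < n + m then w ⟨i - n, by omega⟩ else ψ i with hυ
    refine ⟨υ, fun x hx => ?_⟩
    have hlam : (2:ℝ) ^ (-(m:ℤ) - 2) * r < (2:ℝ) ^ (-((n+m : ℕ):ℤ) - 1) := by
      calc (2:ℝ) ^ (-(m:ℤ) - 2) * r < (2:ℝ) ^ (-(m:ℤ) - 2) * (2:ℝ) ^ (-(n:ℤ) + 1) := by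
            apply mul_lt_mul_of_pos_left hmin (by positivity)
        _ = (2:ℝ) ^ (-((n+m : ℕ):ℤ) - 1) := by
            rw [← zpow_add₀ (by norm_num : (2:ℝ) ≠ 0)]; congr 1; push_cast; ring
    have hagree : ∀ i ≤ n + m, υ i = x i :=
      agree_of_baireDist_lt (lt_trans hx hlam)
    have hψx : ∀ i < n, ψ i = x i := by
      intro i hi
      rw [← hagree i (by omega)]
      simp [hυ, hi]
    constructor
    · show baireDist ψ x < r
      calc baireDist ψ x ≤ (2:ℝ) ^ (-(n:ℤ) - 1) := baireDist_le_of_agree hψx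
        _ < (2:ℝ) ^ (-(n:ℤ)) := by
            apply zpow_lt_zpow_right₀ (by norm_num : (1:ℝ) < 2); omega
        _ ≤ r := hn
    · intro hxB
      obtain ⟨l, hl⟩ := hxB n
      apply hl
      rw [← hagree (n + l.1) (by omega)]
      have h1 : ¬ (n + l.1 < n) := by omega
      have h2 : n + l.1 < n + m := by omega
      simp [hυ, h1, h2, Nat.add_sub_cancel_left]


/-- Theorem "GenericDisjunctive": the set of non-disjunctive
sequences is a Borel, σ-porous subset of the Cantor space with the Baire metric. -/
theorem nondisjunctive_borel_and_sigmaPorous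
    {Γ : Type*} [Fintype Γ] [Nonempty Γ] [TopologicalSpace Γ] [DiscreteTopology Γ] :
    MeasurableSet[borel (ℕ → Γ)] {σ : ℕ → Γ | ¬ Disjunctive σ} ∧
    SigmaPorousWith baireDist {σ : ℕ → Γ | ¬ Disjunctive σ} := by
  have hset : {σ : ℕ → Γ | ¬ Disjunctive σ} =
      ⋃ p : (Σ m : ℕ, Fin m → Γ), BadSet p.1 p.2 := by
    ext σ
    simp only [mem_setOf_eq, Disjunctive, BadSet, mem_iUnion, Sigma.exists]
    push_neg
    rfl
  constructor
  · letI : MeasurableSpace (ℕ → Γ) := borel _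
    haveI : BorelSpace (ℕ → Γ) := ⟨rfl⟩
    rw [hset]
    refine MeasurableSet.iUnion fun p => ?_
    have hB : BadSet p.1 p.2 =
        ⋂ j : ℕ, ⋃ l : Fin p.1, {σ : ℕ → Γ | σ (j + l.1) ≠ p.2 l} := by
      ext σ; simp [BadSet]
    rw [hB]
    refine MeasurableSet.iInter fun j => (isOpen_iUnion fun l => ?_).measurableSet
    have he : {σ : ℕ → Γ | σ (j + l.1) ≠ p.2 l} =
        (fun σ : ℕ → Γ => σ (j + l.1)) ⁻¹' {p.2 l}ᶜ := rfl
    rw [he]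
    exact (continuous_apply (j + l.1)).isOpen_preimage _ (isOpen_discrete _)
  · obtain ⟨f, hf⟩ := exists_surjective_nat (Σ m : ℕ, Fin m → Γ)
    refine ⟨fun n => BadSet (f n).1 (f n).2, fun n => porousWith_badSet _ _, ?_⟩
    rw [hset, ← hf.iUnion_comp (g := fun p : (Σ m : ℕ, Fin m → Γ) => BadSet p.1 p.2)]
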